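/- arXiv:2108.11938 — 5 statements merged into one kernel-verified Lean document; each statement's English description precedes it below -/
import Mathlib

section
/- Let q(z) = Σ_{|k|≤K} b_k z^k be a trigonometric polynomial with complex coefficients such that q(z) > 0 for all z on the unit circle T. Then there exists a polynomial g(z) = Σ_{k=0}^K a_k z^k such that q(z) = |g(z)|² for all z ∈ T. -/
open Polynomial Complex Finset



lemma circle_infinite : Set.Infinite {z : ℂ | ‖z‖ = 1} := by
  apply Set.infinite_of_injective_forall_mem (f := fun n : ℕ => ((n : ℂ) - I)/((n : ℂ) + I))
  case hi =>
    intro n m h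
    have hn : (n : ℂ) + I ≠ 0 := by
      intro h; have := congrArg Complex.im h; simp at this
    have hm : (m : ℂ) + I ≠ 0 := by
      intro h; have := congrArg Complex.im h; simp at this
    rw [div_eq_div_iff hn hm] at h
    have : (2:ℂ) * n * I = 2 * m * I := by ring_nf at h ⊢; linear_combination h
    have : (n : ℂ) = m := by
      field_simp at this; exact_mod_cast this
    exact_mod_cast this
  case hf =>
    intro n
    have hm : (n : ℂ) + I ≠ 0 := by
      intro h; have := congrArg Complex.im h; simp at this
    have h1 : ‖(n : ℂ) - I‖ = ‖(n : ℂ) + I‖ := by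
      rw [Complex.norm_def, Complex.norm_def]
      congr 1
      simp [Complex.normSq_apply]
    simp only [Set.mem_setOf_eq, norm_div, h1]
    rw [div_self]
    simpa using hm

lemma sum_shift (K : ℕ) (c : ℤ → ℂ) (z : ℂ) (hz : z ≠ 0) :
    z ^ K * ∑ k ∈ Finset.Icc (-(K : ℤ)) K, c k * z ^ k
      = ∑ j ∈ Finset.range (2*K+1), c ((j:ℤ) - K) * z ^ j := by
  rw [Finset.mul_sum]
  refine Finset.sum_nbij' (fun k => (k + K).toNat) (fun j => (j : ℤ) - K) ?_ ?_ ?_ ?_ ?_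
  · intro k hk
    simp only [Finset.mem_Icc] at hk
    simp only [Finset.mem_range]
    omega
  · intro j hj
    simp only [Finset.mem_range] at hj
    simp only [Finset.mem_Icc]
    omega
  · intro k hk; simp only [Finset.mem_Icc] at hk; simp; omega
  · intro j hj; simp only [Finset.mem_range] at hj; simp
  · intro k hk
    simp only [Finset.mem_Icc] at hk
    have h1 : ((k + K).toNat : ℤ) = k + K := by omega
    have : (c ((k + (K:ℤ)).toNat - K)) = c k := by congr 1; omega
    rw [this]
    have : z ^ ((k + (K:ℤ)).toNat) = z ^ (k + (K:ℤ)) := by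
      rw [← zpow_natCast, h1]
    rw [this, zpow_add₀ hz]
    ring_nf
    rw [zpow_natCast]
    ring

lemma sum_neg (K : ℕ) (c : ℤ → ℂ) (z : ℂ) :
    ∑ k ∈ Finset.Icc (-(K : ℤ)) K, c k * z ^ (-k)
      = ∑ k ∈ Finset.Icc (-(K : ℤ)) K, c (-k) * z ^ k := by
  refine Finset.sum_nbij' (fun k => -k) (fun k => -k) ?_ ?_ ?_ ?_ ?_ <;>
    simp +contextual [Finset.mem_Icc] <;> omega

lemma coeff_explicit (n : ℕ) (c : ℕ → ℂ) (i : ℕ) :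
    (∑ j ∈ Finset.range n, Polynomial.C (c j) * Polynomial.X ^ j).coeff i
      = if i < n then c i else 0 := by
  rw [Polynomial.finset_sum_coeff]
  simp only [Polynomial.coeff_C_mul, Polynomial.coeff_X_pow]
  rw [Finset.sum_congr rfl (fun j _ => by rw [mul_ite, mul_one, mul_zero])]
  simp [Finset.sum_ite_eq, Finset.mem_range]

lemma conj_circle {z : ℂ} (hz : ‖z‖ = 1) : (starRingEnd ℂ) z = z⁻¹ := by
  have h0 : z ≠ 0 := by intro h; rw [h] at hz; simp at hz
  field_simp
  rw [mul_comm, Complex.mul_conj]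
  norm_cast
  rw [Complex.normSq_eq_norm_sq, hz]; norm_num

lemma coeff_symm (K : ℕ) (b : ℤ → ℂ)
    (hpos : ∀ z : ℂ, ‖z‖ = 1 →
      ∃ r : ℝ, 0 < r ∧ ∑ k ∈ Finset.Icc (-(K : ℤ)) (K : ℤ), b k * z ^ k = (r : ℂ)) :
    ∀ i : ℕ, i ≤ 2*K → b ((i:ℤ) - K) = (starRingEnd ℂ) (b ((K:ℤ) - i)) := by
  set D : Polynomial ℂ :=
    ∑ j ∈ Finset.range (2*K+1), Polynomial.C (b ((j:ℤ) - K) - (starRingEnd ℂ) (b ((K:ℤ) - j))) * Polynomial.X ^ j with hD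
  have hroot : ∀ z : ℂ, ‖z‖ = 1 → D.eval z = 0 := by
    intro z hz
    have h0 : z ≠ 0 := by intro h; rw [h] at hz; simp at hz
    obtain ⟨r, hr, hq⟩ := hpos z hz
    have heval : D.eval z = ∑ j ∈ Finset.range (2*K+1),
        (b ((j:ℤ) - K) - (starRingEnd ℂ) (b ((K:ℤ) - j))) * z ^ j := by
      rw [hD, Polynomial.eval_finset_sum]; simp
    rw [heval]
    have hsplit : ∑ j ∈ Finset.range (2*K+1),
        (b ((j:ℤ) - K) - (starRingEnd ℂ) (b ((K:ℤ) - j))) * z ^ j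
        = (∑ j ∈ Finset.range (2*K+1), b ((j:ℤ) - K) * z ^ j)
          - ∑ j ∈ Finset.range (2*K+1), (starRingEnd ℂ) (b ((K:ℤ) - j)) * z ^ j := by
      rw [← Finset.sum_sub_distrib]; congr 1; ext j; ring
    rw [hsplit, ← sum_shift K b z h0]
    have h2 : ∑ j ∈ Finset.range (2*K+1), (starRingEnd ℂ) (b ((K:ℤ) - j)) * z ^ j
        = z ^ K * ∑ k ∈ Finset.Icc (-(K : ℤ)) K, (starRingEnd ℂ) (b (-k)) * z ^ k := by
      rw [sum_shift K (fun k => (starRingEnd ℂ) (b (-k))) z h0]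
      congr 1; ext j; congr 2; ring_nf
    rw [h2]
    have h3 : ∑ k ∈ Finset.Icc (-(K : ℤ)) K, (starRingEnd ℂ) (b (-k)) * z ^ k
        = (starRingEnd ℂ) (∑ k ∈ Finset.Icc (-(K : ℤ)) K, b k * z ^ k) := by
      rw [← sum_neg K (fun k => (starRingEnd ℂ) (b k)) z, map_sum]
      congr 1; ext k
      rw [map_mul, map_zpow₀, conj_circle hz, zpow_neg, inv_zpow]
    rw [h3, hq, Complex.conj_ofReal, sub_self]
  have hDzero : D = 0 :=
    Polynomial.eq_zero_of_infinite_isRoot D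
      (circle_infinite.mono (fun z hz => hroot z hz))
  intro i hi
  have h5 : D.coeff i = if i < 2*K+1 then
      b ((i:ℤ) - K) - (starRingEnd ℂ) (b ((K:ℤ) - i)) else 0 :=
    coeff_explicit (2*K+1) (fun j : ℕ => b ((j:ℤ) - K) - (starRingEnd ℂ) (b ((K:ℤ) - j))) i
  rw [hDzero, Polynomial.coeff_zero, if_pos (by omega : i < 2*K+1)] at h5
  exact (sub_eq_zero.mp h5.symm)

lemma reflect_one_X_sub_C (a : ℂ) : Polynomial.reflect 1 (Polynomial.X - Polynomial.C a)
    = 1 - Polynomial.C a * Polynomial.X := by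
  ext i
  rw [Polynomial.coeff_reflect]
  match i with
  | 0 => rw [Polynomial.revAt_le (by norm_num)]; simp
  | 1 => rw [Polynomial.revAt_le (by norm_num)]; simp [Polynomial.coeff_one]
  | (n+2) => rw [Polynomial.revAt_eq_self_of_lt (by omega)]; simp [Polynomial.coeff_one, Polynomial.coeff_X]

lemma reflect_pow_X_sub_C (a : ℂ) (k : ℕ) :
    Polynomial.reflect k ((Polynomial.X - Polynomial.C a)^k)
      = (1 - Polynomial.C a * Polynomial.X)^k := by
  induction k with
  | zero => simp
  | succ k ih =>
    have h1 : ((Polynomial.X - Polynomial.C a)^k).natDegree ≤ k := by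
      simp [Polynomial.natDegree_pow]
    have h2 : (Polynomial.X - Polynomial.C a).natDegree ≤ 1 := by
      simp [Polynomial.natDegree_X_sub_C]
    calc Polynomial.reflect (k+1) ((Polynomial.X - Polynomial.C a)^(k+1))
        = Polynomial.reflect (k+1) ((Polynomial.X - Polynomial.C a)^k * (Polynomial.X - Polynomial.C a)) := by
          rw [pow_succ]
      _ = Polynomial.reflect k ((Polynomial.X - Polynomial.C a)^k)
            * Polynomial.reflect 1 (Polynomial.X - Polynomial.C a) :=
          Polynomial.reflect_mul _ _ h1 h2
      _ = (1 - Polynomial.C a * Polynomial.X)^(k+1) := by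
          rw [ih, reflect_one_X_sub_C, pow_succ]

lemma rootMult_le_of_selfinversive {p : Polynomial ℂ} {N : ℕ} (hp : p ≠ 0)
    (hdeg : p.natDegree ≤ N)
    (hself : Polynomial.reflect N (p.map (starRingEnd ℂ)) = p)
    {w : ℂ} (hw : w ≠ 0) :
    p.rootMultiplicity w ≤ p.rootMultiplicity (((starRingEnd ℂ) w)⁻¹) := by
  obtain ⟨Q, hQ⟩ := Polynomial.pow_rootMultiplicity_dvd p w
  set k := p.rootMultiplicity w with hk
  have hQ0 : Q ≠ 0 := by rintro rfl; rw [mul_zero] at hQ; exact hp hQ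
  have h1 : ((Polynomial.X - Polynomial.C w)^k : Polynomial ℂ) ≠ 0 :=
    pow_ne_zero _ (Polynomial.X_sub_C_ne_zero w)
  have hmul := Polynomial.natDegree_mul h1 hQ0
  rw [← hQ, Polynomial.natDegree_pow, Polynomial.natDegree_X_sub_C, mul_one] at hmul
  have hkN : k ≤ N := by omega
  have hdegQ : Q.natDegree ≤ N - k := by omega
  have hmap : p.map (starRingEnd ℂ)
      = (Polynomial.X - Polynomial.C ((starRingEnd ℂ) w))^k * Q.map (starRingEnd ℂ) := by
    rw [hQ, Polynomial.map_mul, Polynomial.map_pow, Polynomial.map_sub,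
      Polynomial.map_X, Polynomial.map_C]
  have hrefl : p = Polynomial.reflect k ((Polynomial.X - Polynomial.C ((starRingEnd ℂ) w))^k)
      * Polynomial.reflect (N - k) (Q.map (starRingEnd ℂ)) := by
    rw [← hself, hmap]
    have : N = k + (N - k) := by omega
    nth_rewrite 1 [this]
    refine Polynomial.reflect_mul
      ((Polynomial.X - Polynomial.C ((starRingEnd ℂ) w))^k) (Q.map (starRingEnd ℂ)) ?_ ?_
    · rw [Polynomial.natDegree_pow, Polynomial.natDegree_X_sub_C, mul_one]
    · rw [Polynomial.natDegree_map (starRingEnd ℂ)]; exact hdegQ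
  set a := (starRingEnd ℂ) w with ha
  have ha0 : a ≠ 0 := by simp [ha, hw]
  have hfac : (1 - Polynomial.C a * Polynomial.X)
      = Polynomial.C (-a) * (Polynomial.X - Polynomial.C a⁻¹) := by
    rw [mul_sub, ← Polynomial.C_mul, neg_mul, mul_inv_cancel₀ ha0,
      Polynomial.C_neg, Polynomial.C_neg, Polynomial.C_1]
    ring
  have hdvd : (Polynomial.X - Polynomial.C a⁻¹)^k ∣ p := by
    rw [hrefl, reflect_pow_X_sub_C, hfac, mul_pow]
    exact Dvd.dvd.mul_right (Dvd.dvd.mul_left dvd_rfl _) _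
  rw [hk]
  exact (Polynomial.le_rootMultiplicity_iff hp).mpr hdvd
lemma norm_sub_inv_conj {z w : ℂ} (hz : ‖z‖ = 1) (hw : w ≠ 0) :
    ‖z - ((starRingEnd ℂ) w)⁻¹‖ = ‖z - w‖ / ‖w‖ := by
  have hzc : z * (starRingEnd ℂ) z = 1 := by
    rw [Complex.mul_conj]
    norm_cast
    rw [Complex.normSq_eq_norm_sq, hz]; norm_num
  have hwc : (starRingEnd ℂ) w ≠ 0 := by simp [hw]
  have key : z - ((starRingEnd ℂ) w)⁻¹ = (z * (starRingEnd ℂ) w - 1) * ((starRingEnd ℂ) w)⁻¹ := by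
    field_simp
  have h2 : z * (starRingEnd ℂ) w - 1 = z * (starRingEnd ℂ) (w - z) := by
    rw [map_sub, mul_sub, hzc]
  rw [key, norm_mul, norm_inv, h2, norm_mul, hz, one_mul, RCLike.norm_conj,
    RCLike.norm_conj, norm_sub_rev, div_eq_mul_inv]

/-- **Fejér–Riesz theorem.** If the trigonometric polynomial
`q(z) = Σ_{|k| ≤ K} b_k z^k` is strictly positive on the unit circle, then there is a
polynomial `g(z) = Σ_{k=0}^{K} a_k z^k` with `q(z) = |g(z)|²` on the circle. -/
theorem fejer_riesz (K : ℕ) (b : ℤ → ℂ)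
    (hpos : ∀ z : ℂ, ‖z‖ = 1 →
      ∃ r : ℝ, 0 < r ∧ ∑ k ∈ Finset.Icc (-(K : ℤ)) (K : ℤ), b k * z ^ k = (r : ℂ)) :
    ∃ a : ℕ → ℂ, ∀ z : ℂ, ‖z‖ = 1 →
      ∑ k ∈ Finset.Icc (-(K : ℤ)) (K : ℤ), b k * z ^ k =
        (Complex.normSq (∑ k ∈ Finset.range (K + 1), a k * z ^ k) : ℂ) := by
  classical
  set p : Polynomial ℂ := ∑ j ∈ Finset.range (2*K+1),
    Polynomial.C (b ((j:ℤ) - K)) * Polynomial.X ^ j with hp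
  have hevalp : ∀ z : ℂ, z ≠ 0 →
      p.eval z = z^K * ∑ k ∈ Finset.Icc (-(K:ℤ)) K, b k * z^k := by
    intro z hz
    rw [hp, Polynomial.eval_finset_sum]
    simp only [Polynomial.eval_mul, Polynomial.eval_pow, Polynomial.eval_C, Polynomial.eval_X]
    exact (sum_shift K b z hz).symm
  have hcirc : ∀ z : ℂ, ‖z‖ = 1 → ∃ r : ℝ, 0 < r ∧
      (∑ k ∈ Finset.Icc (-(K:ℤ)) K, b k * z^k = (r:ℂ)) ∧ ‖p.eval z‖ = r := by
    intro z hz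
    have hz0 : z ≠ 0 := by intro h; rw [h] at hz; simp at hz
    obtain ⟨r, hr, hq⟩ := hpos z hz
    refine ⟨r, hr, hq, ?_⟩
    rw [hevalp z hz0, hq, norm_mul, norm_pow, hz, one_pow, one_mul,
      Complex.norm_real, Real.norm_eq_abs, abs_of_pos hr]
  have hpne : ∀ z : ℂ, ‖z‖ = 1 → p.eval z ≠ 0 := by
    intro z hz
    obtain ⟨r, hr, _, hn⟩ := hcirc z hz
    intro h; rw [h] at hn; simp at hn; exact hr.ne' hn.symm
  have hp0 : p ≠ 0 := by
    intro h
    exact hpne 1 (by simp) (by rw [h]; simp)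
  have hdeg : p.natDegree ≤ 2*K := by
    rw [hp]
    apply Polynomial.natDegree_sum_le_of_forall_le
    intro j hj
    refine le_trans (Polynomial.natDegree_C_mul_le _ _) ?_
    rw [Polynomial.natDegree_X_pow]
    exact Nat.lt_succ_iff.mp (Finset.mem_range.mp hj)
  have hcoeff : ∀ i : ℕ, p.coeff i = if i < 2*K+1 then b ((i:ℤ) - K) else 0 :=
    fun i => coeff_explicit (2*K+1) (fun j => b ((j:ℤ) - K)) i
  have hself : Polynomial.reflect (2*K) (p.map (starRingEnd ℂ)) = p := by
    ext i
    rw [Polynomial.coeff_reflect, Polynomial.coeff_map]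
    by_cases hi : i ≤ 2*K
    · rw [Polynomial.revAt_le hi, hcoeff, hcoeff, if_pos (by omega), if_pos (by omega)]
      have hcast : ((2*K - i : ℕ) : ℤ) - K = (K:ℤ) - i := by omega
      rw [hcast]
      exact ((coeff_symm K b hpos i hi)).symm
    · rw [Polynomial.revAt_eq_self_of_lt (by omega), hcoeff, if_neg (by omega), map_zero]
  -- roots
  have hsplits : p.Splits := IsAlgClosed.splits p
  have hprod := hsplits.eq_prod_roots
  have hcard : Multiset.card p.roots = p.natDegree := Polynomial.splits_iff_card_roots.mp hsplits
  have hRcirc : ∀ w ∈ p.roots, ‖w‖ ≠ 1 := by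
    intro w hw h1
    exact hpne w h1 (Polynomial.isRoot_of_mem_roots hw)
  have hinv : Function.Involutive (fun w : ℂ => ((starRingEnd ℂ) w)⁻¹) := by
    intro w; simp [map_inv₀]
  have hcount : ∀ w : ℂ, w ≠ 0 →
      p.roots.count (((starRingEnd ℂ) w)⁻¹) = p.roots.count w := by
    intro w hw
    have h1 := rootMult_le_of_selfinversive hp0 hdeg hself hw
    have h2 := rootMult_le_of_selfinversive hp0 hdeg hself
      (w := ((starRingEnd ℂ) w)⁻¹) (by simp [hw])
    have h3 : ((starRingEnd ℂ) (((starRingEnd ℂ) w)⁻¹))⁻¹ = w := hinv w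
    rw [h3] at h2
    rw [Polynomial.count_roots, Polynomial.count_roots]
    omega
  set A := p.roots.filter (fun w => ‖w‖ < 1 ∧ w ≠ 0) with hA
  set B := p.roots.filter (fun w => 1 < ‖w‖) with hB
  set Z := p.roots.filter (fun w => w = (0:ℂ)) with hZ
  have hsplit3 : p.roots = Z + A + B := by
    ext x
    simp only [Multiset.count_add, hA, hB, hZ, Multiset.count_filter]
    by_cases hx0 : x = 0
    · subst hx0; norm_num
    by_cases hxR : x ∈ p.roots
    · have hx1 : ‖x‖ ≠ 1 := hRcirc x hxR
      rcases lt_trichotomy ‖x‖ 1 with h|h|h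
      · rw [if_neg (by simp [hx0]), if_pos ⟨h, hx0⟩, if_neg (by push_neg; linarith)]; omega
      · exact absurd h hx1
      · rw [if_neg (by simp [hx0]), if_neg (by push_neg; intro; linarith), if_pos h]; omega
    · have : p.roots.count x = 0 := Multiset.count_eq_zero.mpr hxR
      rw [this]
      split_ifs <;> omega
  have hBA : B = A.map (fun w => ((starRingEnd ℂ) w)⁻¹) := by
    ext x
    have hmapcount := Multiset.count_map_eq_count' _ A hinv.injective (((starRingEnd ℂ) x)⁻¹)
    have h3 : ((starRingEnd ℂ) (((starRingEnd ℂ) x)⁻¹))⁻¹ = x := hinv x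
    rw [h3] at hmapcount
    rw [hmapcount, hB, hA, Multiset.count_filter, Multiset.count_filter]
    by_cases hx : 1 < ‖x‖
    · have hx0 : x ≠ 0 := by intro h; rw [h] at hx; simp at hx; linarith
      have hsx0 : ((starRingEnd ℂ) x)⁻¹ ≠ 0 := by simp [hx0]
      have hsxn : ‖((starRingEnd ℂ) x)⁻¹‖ = ‖x‖⁻¹ := by
        rw [norm_inv, RCLike.norm_conj]
      rw [if_pos hx, if_pos ⟨by rw [hsxn]; exact inv_lt_one_of_one_lt₀ hx, hsx0⟩]
      exact (hcount x hx0).symm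
    · rw [if_neg hx]
      by_cases hx0 : x = 0
      · rw [if_neg (by subst hx0; simp)]
      · rw [if_neg ?_]
        push_neg at hx
        intro ⟨h1, _⟩
        rw [norm_inv, RCLike.norm_conj] at h1
        have := (inv_lt_one_iff₀).mp h1
        rcases this with h|h
        · have : ‖x‖ = 0 := le_antisymm h (norm_nonneg x)
          exact hx0 (norm_eq_zero.mp this)
        · linarith
  have hcardB : Multiset.card B = Multiset.card A := by rw [hBA, Multiset.card_map]
  have hAK : Multiset.card A ≤ K := by
    have h := congrArg Multiset.card hsplit3
    rw [Multiset.card_add, Multiset.card_add, hcardB] at h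
    omega
  set c := p.leadingCoeff with hcdef
  have hc0 : c ≠ 0 := Polynomial.leadingCoeff_ne_zero.mpr hp0
  set nA : ℝ := ((A.map (fun w : ℂ => ‖w‖)).prod) with hnA
  have hnApos : 0 < nA := by
    apply Multiset.prod_pos
    intro x hx
    obtain ⟨w, hw, rfl⟩ := Multiset.mem_map.mp hx
    rw [hA] at hw
    exact norm_pos_iff.mpr (Multiset.mem_filter.mp hw).2.2
  set t : ℝ := ‖c‖ / nA with htdef
  have htpos : 0 < t := div_pos (norm_pos_iff.mpr hc0) hnApos
  set g : Polynomial ℂ := Polynomial.C ((Real.sqrt t : ℝ) : ℂ)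
    * (A.map (fun w => Polynomial.X - Polynomial.C w)).prod with hgdef
  have hgdeg : g.natDegree ≤ K := by
    refine le_trans (Polynomial.natDegree_C_mul_le _ _) ?_
    rw [Polynomial.natDegree_multiset_prod_X_sub_C_eq_card]
    exact hAK
  refine ⟨fun n => g.coeff n, ?_⟩
  intro z hz
  obtain ⟨r, hr, hq, hnorm⟩ := hcirc z hz
  have hsum : ∑ k ∈ Finset.range (K+1), g.coeff k * z^k = g.eval z :=
    (Polynomial.eval_eq_sum_range' (Nat.lt_succ_of_le hgdeg) z).symm
  rw [hq, hsum]
  have hevalprod : p.eval z = c * ((p.roots.map (fun w => z - w)).prod) := by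
    conv_lhs => rw [hprod]
    rw [Polynomial.eval_mul, Polynomial.eval_C, Polynomial.eval_multiset_prod, Multiset.map_map]
    congr 1
    exact congrArg Multiset.prod (Multiset.map_congr rfl (fun w _ => by simp))
  have hnp : ‖p.eval z‖ = ‖c‖ * ((p.roots.map (fun w => ‖z - w‖)).prod) := by
    rw [hevalprod, norm_mul]
    congr 1
    have hn := map_multiset_prod (normHom : ℂ →*₀ ℝ) (p.roots.map (fun w => z - w))
    simp only [normHom_apply] at hn
    rw [hn, Multiset.map_map]
    apply congrArg
    apply Multiset.map_congr rfl
    intro w _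
    simp
  have hprodZ : ((Z.map (fun w : ℂ => ‖z - w‖)).prod) = 1 := by
    apply Multiset.prod_eq_one
    intro x hx
    obtain ⟨w, hw, rfl⟩ := Multiset.mem_map.mp hx
    rw [hZ] at hw
    rw [(Multiset.mem_filter.mp hw).2, sub_zero, hz]
  have hprodB : ((B.map (fun w : ℂ => ‖z - w‖)).prod)
      = ((A.map (fun w : ℂ => ‖z - w‖)).prod) / nA := by
    rw [hBA, Multiset.map_map]
    have hcg : ∀ w ∈ A, ((fun w : ℂ => ‖z - w‖) ∘ fun w => ((starRingEnd ℂ) w)⁻¹) w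
        = ‖z - w‖ / ‖w‖ := by
      intro w hw
      have hw0 : w ≠ 0 := by rw [hA] at hw; exact (Multiset.mem_filter.mp hw).2.2
      exact norm_sub_inv_conj hz hw0
    rw [Multiset.map_congr rfl hcg, Multiset.prod_map_div]
  have hr_eq : r = t * ((A.map (fun w : ℂ => ‖z - w‖)).prod)^2 := by
    rw [← hnorm, hnp, hsplit3, Multiset.map_add, Multiset.map_add, Multiset.prod_add,
      Multiset.prod_add, hprodZ, hprodB, one_mul]
    field_simp [htdef]
    rw [htdef]
    field_simp [hnApos.ne']
  have hgeval : g.eval z = ((Real.sqrt t : ℝ) : ℂ) * ((A.map (fun w => z - w)).prod) := by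
    rw [hgdef, Polynomial.eval_mul, Polynomial.eval_C, Polynomial.eval_multiset_prod,
      Multiset.map_map]
    congr 1
    exact congrArg Multiset.prod (Multiset.map_congr rfl (fun w _ => by simp))
  have hng : ‖g.eval z‖ = Real.sqrt t * ((A.map (fun w : ℂ => ‖z - w‖)).prod) := by
    rw [hgeval, norm_mul, Complex.norm_real, Real.norm_eq_abs, _root_.abs_of_nonneg (Real.sqrt_nonneg t)]
    congr 1
    have hn := map_multiset_prod (normHom : ℂ →*₀ ℝ) (A.map (fun w => z - w))
    simp only [normHom_apply] at hn
    rw [hn, Multiset.map_map]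
    apply congrArg
    apply Multiset.map_congr rfl
    intro w _
    simp
  have hnsq : Complex.normSq (g.eval z) = r := by
    rw [Complex.normSq_eq_norm_sq, hng, mul_pow, Real.sq_sqrt htpos.le, hr_eq]
  rw [hnsq]
end

section
/- Let X be a compact Hausdorff space, θ : X → X a uniquely ergodic homeomorphism with invariant measure μ, and f : X → T continuous. Then the set of integers n ∈ ℤ for which the cohomological equation g(θ(x)) f(x)^n = g(x) admits a nontrivial continuous solution g ∈ C(X) (i.e., g not identically zero) is a subgroup of ℤ. -/
open MeasureTheory Filter Topology BoundedContinuousFunction Set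
open scoped NNReal ENNReal

noncomputable section

namespace CohomAux

set_option linter.unusedSectionVars false

variable {X : Type*} [TopologicalSpace X] [CompactSpace X] [T2Space X]
variable (θ : X ≃ₜ X) (x0 : X)

/-- the orbit of `x0` -/
def orb (k : ℕ) : X := (θ : X → X)^[k] x0

/-- Birkhoff averages, valued in `ℝ≥0∞`. -/
def avg (f : X →ᵇ ℝ≥0) (N : ℕ) : ℝ≥0∞ :=
  (∑ k ∈ Finset.range N, (f (orb θ x0 k) : ℝ≥0∞)) / N

/-- a fixed ultrafilter extending `atTop` -/
def U : Ultrafilter ℕ := Ultrafilter.of atTop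

lemma U_le_atTop : (U : Filter ℕ) ≤ atTop := Ultrafilter.of_le _

lemma tendsto_cdivN (C : ℝ≥0) :
    Tendsto (fun N : ℕ => (C : ℝ≥0∞) / N) (U : Filter ℕ) (𝓝 0) := by
  have h : Tendsto (fun N : ℕ => (C : ℝ≥0∞) / N) atTop (𝓝 0) := by
    have := ENNReal.Tendsto.const_mul (a := (C : ℝ≥0∞))
      ENNReal.tendsto_inv_nat_nhds_zero (Or.inr ENNReal.coe_ne_top)
    simpa [div_eq_mul_inv] using this
  exact h.mono_left (U_le_atTop)

/-- the generalized Birkhoff limit functional -/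
def L (f : X →ᵇ ℝ≥0) : ℝ≥0∞ := limUnder (U : Filter ℕ) (avg θ x0 f)

lemma tendsto_avg (f : X →ᵇ ℝ≥0) :
    Tendsto (avg θ x0 f) (U : Filter ℕ) (𝓝 (L θ x0 f)) :=
  tendsto_nhds_limUnder ⟨(U.map (avg θ x0 f)).lim,
    (U.map (avg θ x0 f)).le_nhds_lim⟩

lemma exists_bound (f : X →ᵇ ℝ≥0) : ∃ C : ℝ≥0, ∀ x, f x ≤ C := by
  obtain ⟨r, hr⟩ := f.isBounded_range.subset_closedBall 0
  refine ⟨r.toNNReal, fun x => ?_⟩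
  have := hr (mem_range_self (f := f) x)
  rw [Metric.mem_closedBall, NNReal.dist_eq] at this
  simp only [NNReal.coe_zero, sub_zero] at this
  rw [← NNReal.coe_le_coe, Real.coe_toNNReal']
  exact le_max_of_le_left ((le_abs_self _).trans this)

lemma avg_le {f : X →ᵇ ℝ≥0} {C : ℝ≥0} (hC : ∀ x, f x ≤ C) (N : ℕ) :
    avg θ x0 f N ≤ (C : ℝ≥0∞) := by
  rcases Nat.eq_zero_or_pos N with h | h
  · simp [avg, h]
  · have hsum : (∑ k ∈ Finset.range N, (f (orb θ x0 k) : ℝ≥0∞)) ≤ N * C := by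
      calc (∑ k ∈ Finset.range N, (f (orb θ x0 k) : ℝ≥0∞))
          ≤ ∑ _k ∈ Finset.range N, (C : ℝ≥0∞) :=
            Finset.sum_le_sum (fun k _ => by exact_mod_cast hC _)
        _ = N * C := by simp [Finset.sum_const, mul_comm]
    rw [avg, ENNReal.div_le_iff (by exact_mod_cast h.ne') (by simp)]
    exact hsum.trans_eq (mul_comm _ _)

lemma L_le {f : X →ᵇ ℝ≥0} {C : ℝ≥0} (hC : ∀ x, f x ≤ C) : L θ x0 f ≤ C :=
  le_of_tendsto (tendsto_avg θ x0 f) (Eventually.of_forall (avg_le θ x0 hC))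

lemma L_ne_top (f : X →ᵇ ℝ≥0) : L θ x0 f ≠ ⊤ := by
  obtain ⟨C, hC⟩ := exists_bound f
  exact ((L_le θ x0 hC).trans_lt ENNReal.coe_lt_top).ne

lemma L_mono {f g : X →ᵇ ℝ≥0} (h : ∀ x, f x ≤ g x) : L θ x0 f ≤ L θ x0 g := by
  refine le_of_tendsto_of_tendsto (tendsto_avg θ x0 f) (tendsto_avg θ x0 g)
    (Eventually.of_forall fun N => ?_)
  exact ENNReal.div_le_div_right
    (Finset.sum_le_sum fun k _ => by exact_mod_cast h _) _

lemma L_add (f g : X →ᵇ ℝ≥0) : L θ x0 (f + g) = L θ x0 f + L θ x0 g := by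
  refine tendsto_nhds_unique (tendsto_avg θ x0 (f + g)) ?_
  have : ∀ N, avg θ x0 (f + g) N = avg θ x0 f N + avg θ x0 g N := by
    intro N
    simp [avg, ← ENNReal.add_div, ← Finset.sum_add_distrib]
  rw [funext this]
  exact (tendsto_avg θ x0 f).add (tendsto_avg θ x0 g)

lemma L_smul (c : ℝ≥0) (f : X →ᵇ ℝ≥0) : L θ x0 (c • f) = c * L θ x0 f := by
  refine tendsto_nhds_unique (tendsto_avg θ x0 (c • f)) ?_
  have : ∀ N, avg θ x0 (c • f) N = c * avg θ x0 f N := by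
    intro N
    have h1 : ∀ k, ((c • f) (orb θ x0 k) : ℝ≥0∞) = c * (f (orb θ x0 k) : ℝ≥0∞) := by
      intro k
      rw [show (c • f) (orb θ x0 k) = c * f (orb θ x0 k) from rfl]
      push_cast; rfl
    simp only [avg, h1, ← Finset.mul_sum, div_eq_mul_inv, mul_assoc]
  rw [funext this]
  exact ENNReal.Tendsto.const_mul (tendsto_avg θ x0 f) (Or.inr ENNReal.coe_ne_top)

lemma L_one : L θ x0 (1 : X →ᵇ ℝ≥0) = 1 := by
  refine tendsto_nhds_unique (tendsto_avg θ x0 1) ?_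
  have hev : avg θ x0 (1 : X →ᵇ ℝ≥0) =ᶠ[(U : Filter ℕ)] fun _ => 1 := by
    filter_upwards [U_le_atTop (eventually_ge_atTop 1)] with N hN
    have : (N : ℝ≥0∞) ≠ 0 := by exact_mod_cast (Nat.one_le_iff_ne_zero.mp hN)
    simp [avg, ENNReal.div_self this (by simp)]
  exact Tendsto.congr' hev.symm tendsto_const_nhds

lemma orb_succ (k : ℕ) : orb θ x0 (k + 1) = θ (orb θ x0 k) := by
  simp [orb, Function.iterate_succ_apply']

lemma L_comp (f : X →ᵇ ℝ≥0) :
    L θ x0 (f.compContinuous (θ : C(X, X))) = L θ x0 f := by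
  obtain ⟨C, hC⟩ := exists_bound f
  set g : ℕ → ℝ≥0∞ := fun k => (f (orb θ x0 k) : ℝ≥0∞) with hg
  have key : ∀ N, (∑ k ∈ Finset.range N, g (k + 1)) + g 0
      = (∑ k ∈ Finset.range N, g k) + g N := by
    intro N
    rw [← Finset.sum_range_succ', Finset.sum_range_succ]
  have havg : ∀ N, avg θ x0 (f.compContinuous (θ : C(X, X))) N
      = (∑ k ∈ Finset.range N, g (k + 1)) / N := by
    intro N
    unfold avg
    congr 1
    refine Finset.sum_congr rfl fun k _ => ?_
    rw [hg]
    simp [BoundedContinuousFunction.coe_compContinuous, orb_succ]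
  have hbound : ∀ k, g k ≤ (C : ℝ≥0∞) := fun k => by
    simpa [hg] using (ENNReal.coe_le_coe.mpr (hC (orb θ x0 k)))
  have h1 : ∀ N, avg θ x0 (f.compContinuous (θ : C(X, X))) N
      ≤ avg θ x0 f N + (C : ℝ≥0∞) / N := by
    intro N
    rw [havg]
    calc (∑ k ∈ Finset.range N, g (k + 1)) / N
        ≤ ((∑ k ∈ Finset.range N, g (k + 1)) + g 0) / N :=
          ENNReal.div_le_div_right le_self_add _
      _ = ((∑ k ∈ Finset.range N, g k) + g N) / N := by rw [key]
      _ = (∑ k ∈ Finset.range N, g k) / N + g N / N := ENNReal.add_div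
      _ ≤ avg θ x0 f N + (C : ℝ≥0∞) / N :=
          add_le_add le_rfl (ENNReal.div_le_div_right (hbound N) _)
  have h2 : ∀ N, avg θ x0 f N
      ≤ avg θ x0 (f.compContinuous (θ : C(X, X))) N + (C : ℝ≥0∞) / N := by
    intro N
    rw [havg]
    calc avg θ x0 f N
        ≤ ((∑ k ∈ Finset.range N, g k) + g N) / N :=
          ENNReal.div_le_div_right le_self_add _
      _ = ((∑ k ∈ Finset.range N, g (k + 1)) + g 0) / N := by rw [key]
      _ = (∑ k ∈ Finset.range N, g (k + 1)) / N + g 0 / N := ENNReal.add_div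
      _ ≤ _ := add_le_add le_rfl (ENNReal.div_le_div_right (hbound 0) _)
  have t0 := tendsto_cdivN C
  have lim1 : L θ x0 (f.compContinuous (θ : C(X, X))) ≤ L θ x0 f := by
    have := le_of_tendsto_of_tendsto
      (tendsto_avg θ x0 (f.compContinuous (θ : C(X, X))))
      ((tendsto_avg θ x0 f).add t0) (Eventually.of_forall h1)
    simpa using this
  have lim2 : L θ x0 f ≤ L θ x0 (f.compContinuous (θ : C(X, X))) := by
    have := le_of_tendsto_of_tendsto (tendsto_avg θ x0 f)
      ((tendsto_avg θ x0 (f.compContinuous (θ : C(X, X)))).add t0)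
      (Eventually.of_forall h2)
    simpa using this
  exact le_antisymm lim1 lim2

lemma L_zero_of_orbit {f : X →ᵇ ℝ≥0} (h : ∀ k, f (orb θ x0 k) = 0) :
    L θ x0 f = 0 := by
  refine tendsto_nhds_unique (tendsto_avg θ x0 f) ?_
  have : ∀ N, avg θ x0 f N = 0 := by
    intro N
    simp [avg, h]
  rw [funext this]
  exact tendsto_const_nhds

/-- the positive linear functional -/
def Lam : (X →ᵇ ℝ≥0) →ₗ[ℝ≥0] ℝ≥0 where
  toFun f := (L θ x0 f).toNNReal
  map_add' f g := by
    rw [L_add, ENNReal.toNNReal_add (L_ne_top θ x0 f) (L_ne_top θ x0 g)]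
  map_smul' c f := by
    rw [L_smul, ENNReal.toNNReal_mul]
    simp [smul_eq_mul]

lemma Lam_mono {f g : X →ᵇ ℝ≥0} (h : ∀ x, f x ≤ g x) :
    Lam θ x0 f ≤ Lam θ x0 g :=
  (ENNReal.toNNReal_le_toNNReal (L_ne_top θ x0 f) (L_ne_top θ x0 g)).mpr (L_mono θ x0 h)

lemma Lam_comp (f : X →ᵇ ℝ≥0) :
    Lam θ x0 (f.compContinuous (θ : C(X, X))) = Lam θ x0 f := by
  unfold Lam
  dsimp only [LinearMap.coe_mk, AddHom.coe_mk]
  rw [L_comp]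

lemma Lam_one : Lam θ x0 (1 : X →ᵇ ℝ≥0) = 1 := by
  unfold Lam
  dsimp only [LinearMap.coe_mk, AddHom.coe_mk]
  rw [L_one]
  rfl

/-- turn a `[0,1]`-valued real continuous function into a bounded `ℝ≥0`-valued one -/
def toNN (u : C(X, ℝ)) : X →ᵇ ℝ≥0 :=
  BoundedContinuousFunction.mkOfCompact
    ⟨fun x => Real.toNNReal (u x), continuous_real_toNNReal.comp u.continuous⟩

lemma toNN_apply (u : C(X, ℝ)) (x : X) : toNN u x = Real.toNNReal (u x) := rfl

/-- view a compactly supported function as a bounded one -/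
def ofC (f : CompactlySupportedContinuousMap X ℝ≥0) : X →ᵇ ℝ≥0 :=
  BoundedContinuousFunction.mkOfCompact (f : C(X, ℝ≥0))

/-- `Lam` on compactly supported functions -/
def LamC : CompactlySupportedContinuousMap X ℝ≥0 →ₗ[ℝ≥0] ℝ≥0 where
  toFun f := Lam θ x0 (ofC f)
  map_add' f g := by
    rw [← map_add]
    congr 1
  map_smul' c f := by
    rw [← map_smul]
    congr 1

/-- the Riesz content associated to `Lam`. -/
def cont : Content X where
  toFun := rieszContentAux (LamC θ x0)
  mono' K₁ K₂ h := rieszContentAux_mono (LamC θ x0) h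
  sup_le' := rieszContentAux_sup_le (LamC θ x0)
  sup_disjoint' K₁ K₂ hd _ _ := rieszContentAux_union (LamC θ x0) hd

lemma cont_map (K : TopologicalSpace.Compacts X) :
    rieszContentAux (LamC θ x0) (K.map θ θ.continuous) = rieszContentAux (LamC θ x0) K := by
  unfold rieszContentAux
  congr 1
  apply Set.Subset.antisymm
  · rintro b ⟨f, hf, rfl⟩
    refine ⟨CompactlySupportedContinuousMap.continuousMapEquiv
      ((f : C(X, ℝ≥0)).comp (θ : C(X, X))), ?_, ?_⟩
    · intro x hx
      exact hf (θ x) ⟨x, hx, rfl⟩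
    · exact (congrArg (Lam θ x0) (by ext x; rfl)).trans (Lam_comp θ x0 (ofC f))
  · rintro b ⟨g, hg, rfl⟩
    refine ⟨CompactlySupportedContinuousMap.continuousMapEquiv
      ((g : C(X, ℝ≥0)).comp (θ.symm : C(X, X))), ?_, ?_⟩
    · rintro x ⟨y, hy, rfl⟩
      show (1 : ℝ≥0) ≤ g (θ.symm (θ y))
      rw [Homeomorph.symm_apply_apply]
      exact hg y hy
    · exact (Lam_comp θ x0 (ofC (CompactlySupportedContinuousMap.continuousMapEquiv
        ((g : C(X, ℝ≥0)).comp (θ.symm : C(X, X)))))).symm.trans (congrArg (Lam θ x0) (by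
        ext x
        show ((g (θ.symm (θ x)) : ℝ≥0) : ℝ) = g x
        rw [Homeomorph.symm_apply_apply]))

variable [MeasurableSpace X] [BorelSpace X]

/-- the invariant measure built from the Birkhoff functional -/
def nu : Measure X := (cont θ x0).measure

instance nu_prob : IsProbabilityMeasure (nu θ x0) := by
  constructor
  rw [nu, (cont θ x0).measure_apply MeasurableSet.univ,
    (cont θ x0).outerMeasure_of_isOpen univ isOpen_univ]
  have h1 : (cont θ x0).innerContent ⟨univ, isOpen_univ⟩
      = cont θ x0 ⟨univ, isCompact_univ⟩ :=
    (cont θ x0).innerContent_of_isCompact isCompact_univ isOpen_univ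
  have h2 : rieszContentAux (LamC θ x0) ⟨univ, isCompact_univ⟩ = 1 := by
    apply le_antisymm
    · have := rieszContentAux_le (LamC θ x0) (K := ⟨univ, isCompact_univ⟩)
        (f := CompactlySupportedContinuousMap.continuousMapEquiv 1) (fun x _ => le_refl 1)
      have e : LamC θ x0 (CompactlySupportedContinuousMap.continuousMapEquiv 1)
          = Lam θ x0 1 := congrArg (Lam θ x0) (by ext x; rfl)
      rwa [e, Lam_one] at this
    · refine le_csInf (rieszContentAux_image_nonempty (LamC θ x0) _) ?_
      rintro b ⟨f, hf, rfl⟩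
      have : Lam θ x0 1 ≤ Lam θ x0 (ofC f) := Lam_mono θ x0 (fun x => by
        show (1 : ℝ≥0) ≤ f x
        exact hf x (mem_univ x))
      rwa [Lam_one] at this
  rw [h1]
  show ((rieszContentAux (LamC θ x0) ⟨univ, isCompact_univ⟩ : ℝ≥0) : ℝ≥0∞) = 1
  rw [h2]
  rfl

lemma nu_invariant {A : Set X} (hA : MeasurableSet A) :
    nu θ x0 (θ ⁻¹' A) = nu θ x0 A := by
  rw [nu, (cont θ x0).measure_apply (hA.preimage θ.measurable),
    (cont θ x0).measure_apply hA]
  exact (cont θ x0).outerMeasure_preimage θ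
    (fun K => by
      show ((rieszContentAux (LamC θ x0) (K.map θ θ.continuous) : ℝ≥0) : ℝ≥0∞) = _
      rw [cont_map θ x0 K]
      rfl) A

lemma nu_compl_zero {K : Set X} (hKc : IsClosed K) (hinv : ∀ x ∈ K, θ x ∈ K)
    (hx0 : x0 ∈ K) : nu θ x0 Kᶜ = 0 := by
  have horb : ∀ k, orb θ x0 k ∈ K := by
    intro k
    induction k with
    | zero => exact hx0
    | succ n ih => rw [orb_succ]; exact hinv _ ih
  rw [nu, (cont θ x0).measure_apply hKc.measurableSet.compl,
    (cont θ x0).outerMeasure_of_isOpen Kᶜ hKc.isOpen_compl]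
  have : (cont θ x0).innerContent ⟨Kᶜ, hKc.isOpen_compl⟩ ≤ 0 := by
    rw [Content.innerContent]
    refine iSup₂_le fun C hC => ?_
    obtain ⟨u, hu0, hu1, hu01⟩ := exists_continuous_zero_one_of_isCompact'
      C.isCompact hKc (Set.disjoint_left.mpr fun x hx => hC hx)
    set v := CompactlySupportedContinuousMap.continuousMapEquiv (toNN u).toContinuousMap
    have hcont : rieszContentAux (LamC θ x0) C ≤ LamC θ x0 v := by
      apply rieszContentAux_le
      intro x hx
      show (1 : ℝ≥0) ≤ toNN u x
      rw [toNN_apply, hu1 hx]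
      simp
    have hLam : LamC θ x0 v = 0 := by
      show Lam θ x0 (ofC v) = 0
      unfold Lam
      dsimp only [LinearMap.coe_mk, AddHom.coe_mk]
      rw [L_zero_of_orbit θ x0 (f := ofC v) (fun k => by
        show toNN u (orb θ x0 k) = 0
        rw [toNN_apply, hu0 (horb k)]
        simp)]
      rfl
    show ((rieszContentAux (LamC θ x0) C : ℝ≥0) : ℝ≥0∞) ≤ 0
    rw [le_antisymm (hcont.trans_eq hLam) zero_le]
    simp
  exact le_antisymm this zero_le

/-- Krylov–Bogolyubov-type result: every nonempty closed invariant subset carries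
an invariant Borel probability measure. -/
theorem exists_invariant_measure_on {K : Set X} (hKc : IsClosed K) (hne : K.Nonempty)
    (hinv : ∀ x ∈ K, θ x ∈ K) :
    ∃ ν : Measure X, IsProbabilityMeasure ν ∧
      (∀ A : Set X, MeasurableSet A → ν (θ ⁻¹' A) = ν A) ∧ ν Kᶜ = 0 := by
  obtain ⟨x0, hx0⟩ := hne
  exact ⟨nu θ x0, nu_prob θ x0, fun A hA => nu_invariant θ x0 hA,
    nu_compl_zero θ x0 hKc hinv hx0⟩

/-- Under unique ergodicity, continuous invariant real functions are constant. -/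
theorem invariant_const (θ : X ≃ₜ X)
    (hue : ∃! μ : Measure X, IsProbabilityMeasure μ ∧
      ∀ A : Set X, MeasurableSet A → μ (θ ⁻¹' A) = μ A)
    (φ : C(X, ℝ)) (hφ : ∀ x, φ (θ x) = φ x) (x y : X) : φ x = φ y := by
  obtain ⟨μ, ⟨hμp, hμinv⟩, huniq⟩ := hue
  obtain ⟨b, -, hb⟩ := isCompact_univ.exists_isMaxOn ⟨x, mem_univ x⟩
    φ.continuous.continuousOn
  obtain ⟨a, -, ha⟩ := isCompact_univ.exists_isMinOn ⟨x, mem_univ x⟩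
    φ.continuous.continuousOn
  have hab : φ a = φ b := by
    by_contra hne
    have hKb : ∃ ν : Measure X, IsProbabilityMeasure ν ∧
        (∀ A : Set X, MeasurableSet A → ν (θ ⁻¹' A) = ν A) ∧ ν {z | φ z = φ b}ᶜ = 0 :=
      exists_invariant_measure_on θ (isClosed_eq φ.continuous continuous_const)
        ⟨b, rfl⟩ (fun z hz => by simp only [mem_setOf_eq] at hz ⊢; rw [hφ z, hz])
    have hKa : ∃ ν : Measure X, IsProbabilityMeasure ν ∧
        (∀ A : Set X, MeasurableSet A → ν (θ ⁻¹' A) = ν A) ∧ ν {z | φ z = φ a}ᶜ = 0 :=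
      exists_invariant_measure_on θ (isClosed_eq φ.continuous continuous_const)
        ⟨a, rfl⟩ (fun z hz => by simp only [mem_setOf_eq] at hz ⊢; rw [hφ z, hz])
    obtain ⟨νb, hνbp, hνbinv, hνb0⟩ := hKb
    obtain ⟨νa, hνap, hνainv, hνa0⟩ := hKa
    have hbμ : νb = μ := huniq νb ⟨hνbp, hνbinv⟩
    have haμ : νa = μ := huniq νa ⟨hνap, hνainv⟩
    have hcover : (univ : Set X) ⊆ {z | φ z = φ a}ᶜ ∪ {z | φ z = φ b}ᶜ := by
      intro z _
      by_contra hz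
      simp only [mem_union, mem_compl_iff, mem_setOf_eq, not_or, not_not] at hz
      exact hne (hz.1 ▸ hz.2 ▸ rfl)
    have : (1 : ℝ≥0∞) ≤ 0 := by
      calc (1 : ℝ≥0∞) = μ univ := hμp.measure_univ.symm
        _ ≤ μ ({z | φ z = φ a}ᶜ ∪ {z | φ z = φ b}ᶜ) := measure_mono hcover
        _ ≤ μ {z | φ z = φ a}ᶜ + μ {z | φ z = φ b}ᶜ := measure_union_le _ _
        _ = 0 := by
            rw [haμ] at hνa0
            rw [hbμ] at hνb0
            rw [hνa0, hνb0, add_zero]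
    simp at this
  have h1 : φ x ≤ φ b := hb (mem_univ x)
  have h2 : φ a ≤ φ x := ha (mem_univ x)
  have h3 : φ y ≤ φ b := hb (mem_univ y)
  have h4 : φ a ≤ φ y := ha (mem_univ y)
  linarith [hab]

end CohomAux

open CohomAux in
/-- For a uniquely ergodic homeomorphism `θ` and continuous `f : X → 𝕋`, the set of
integers `n` for which the continuous cohomological equation `g(θ x) f(x)^n = g(x)` has a
nontrivial continuous solution is a subgroup of `ℤ`. -/
theorem cohomological_levels_subgroup {X : Type*} [TopologicalSpace X] [CompactSpace X]
    [T2Space X] [MeasurableSpace X] [BorelSpace X] (θ : X ≃ₜ X)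
    (hue : ∃! μ : Measure X, IsProbabilityMeasure μ ∧
      ∀ A : Set X, MeasurableSet A → μ (θ ⁻¹' A) = μ A)
    (f : C(X, Circle)) :
    ∃ H : AddSubgroup ℤ, (H : Set ℤ) =
      {n : ℤ | ∃ g : C(X, ℂ), g ≠ 0 ∧
        ∀ x : X, g (θ x) * ((f x ^ n : Circle) : ℂ) = g x} := by
  have hX : Nonempty X := by
    obtain ⟨μ, ⟨hμp, -⟩, -⟩ := hue
    by_contra h
    rw [not_nonempty_iff] at h
    have h1 : μ univ = 1 := hμp.measure_univ
    rw [Set.univ_eq_empty_iff.mpr h, measure_empty] at h1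
    simp at h1
  obtain ⟨p⟩ := hX
  set S : Set ℤ := {n : ℤ | ∃ g : C(X, ℂ), g ≠ 0 ∧
    ∀ x : X, g (θ x) * ((f x ^ n : Circle) : ℂ) = g x} with hS
  -- every solution is nonvanishing everywhere
  have habs : ∀ (n : ℤ) (g : C(X, ℂ)), g ≠ 0 →
      (∀ x : X, g (θ x) * ((f x ^ n : Circle) : ℂ) = g x) → ∀ x, g x ≠ 0 := by
    intro n g hg0 hg x
    have hφinv : ∀ z, ‖g (θ z)‖ = ‖g z‖ := by
      intro z
      have := congrArg (‖·‖) (hg z)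
      rwa [norm_mul, Circle.norm_coe, mul_one] at this
    have hconst := invariant_const θ hue
      ⟨fun z => ‖g z‖, continuous_norm.comp g.continuous⟩ hφinv
    obtain ⟨x1, hx1⟩ : ∃ x1, g x1 ≠ 0 := by
      by_contra h
      push_neg at h
      exact hg0 (ContinuousMap.ext fun z => by rw [h z]; rfl)
    intro hx
    have : ‖g x‖ = ‖g x1‖ := hconst x x1
    rw [hx, norm_zero] at this
    exact hx1 (by rwa [eq_comm, norm_eq_zero] at this)
  have hzero : (0 : ℤ) ∈ S := by
    refine ⟨1, ?_, ?_⟩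
    · intro h
      have := ContinuousMap.congr_fun h p
      simp at this
    · intro x
      simp
  have hneg : ∀ {n : ℤ}, n ∈ S → -n ∈ S := by
    rintro n ⟨g, hg0, hg⟩
    refine ⟨⟨fun x => (starRingEnd ℂ) (g x),
      Complex.continuous_conj.comp g.continuous⟩, ?_, ?_⟩
    · intro h
      apply hg0
      ext z
      have := ContinuousMap.congr_fun h z
      simpa using this
    · intro x
      show (starRingEnd ℂ) (g (θ x)) * ((f x ^ (-n) : Circle) : ℂ)
        = (starRingEnd ℂ) (g x)
      rw [zpow_neg, Circle.coe_inv_eq_conj, ← map_mul, hg x]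
  have hadd : ∀ {n m : ℤ}, n ∈ S → m ∈ S → n + m ∈ S := by
    rintro n m ⟨g1, hg10, hg1⟩ ⟨g2, hg20, hg2⟩
    refine ⟨g1 * g2, ?_, ?_⟩
    · intro h
      have := ContinuousMap.congr_fun h p
      rw [ContinuousMap.mul_apply] at this
      exact habs n g1 hg10 hg1 p (by
        rcases mul_eq_zero.mp this with h1 | h2
        · exact h1
        · exact absurd h2 (habs m g2 hg20 hg2 p))
    · intro x
      show (g1 * g2) (θ x) * ((f x ^ (n + m) : Circle) : ℂ) = (g1 * g2) x
      rw [ContinuousMap.mul_apply, ContinuousMap.mul_apply, zpow_add, Circle.coe_mul]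
      calc g1 (θ x) * g2 (θ x) * (((f x ^ n : Circle) : ℂ) * ((f x ^ m : Circle) : ℂ))
          = (g1 (θ x) * ((f x ^ n : Circle) : ℂ))
            * (g2 (θ x) * ((f x ^ m : Circle) : ℂ)) := by ring
        _ = g1 x * g2 x := by rw [hg1 x, hg2 x]
  refine ⟨{ carrier := S
            zero_mem' := hzero
            add_mem' := fun ha hb => hadd ha hb
            neg_mem' := fun ha => hneg ha }, rfl⟩
end
end

section
/- Let X be a compact Hausdorff space, θ : X → X a homeomorphism with a θ-invariant ergodic probability measure μ, f : X → T continuous, and n ∈ ℤ. If g₁, g₂ ∈ L^∞(X, μ) both satisfy g(θ(x)) f(x)^n = g(x) μ-a.e., and g₁ is not μ-a.e. zero, then g₂ = c · g₁ μ-a.e. for some constant c ∈ ℂ. -/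
open MeasureTheory

/-- For an ergodic system, the solution in `L^∞(X, μ)` of the cohomological equation at a
fixed level `n` is unique up to a multiplicative constant. -/
theorem cohomological_solution_unique {X : Type*} [TopologicalSpace X] [CompactSpace X]
    [T2Space X] [MeasurableSpace X] [BorelSpace X]
    (θ : X ≃ₜ X) (μ : Measure X) [IsProbabilityMeasure μ] (herg : Ergodic θ μ)
    (f : C(X, Circle)) (n : ℤ) (g₁ g₂ : X → ℂ)
    (h₁m : MemLp g₁ ⊤ μ) (h₂m : MemLp g₂ ⊤ μ)
    (h₁ : ∀ᵐ x ∂μ, g₁ (θ x) * ((f x ^ n : Circle) : ℂ) = g₁ x)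
    (h₂ : ∀ᵐ x ∂μ, g₂ (θ x) * ((f x ^ n : Circle) : ℂ) = g₂ x)
    (hnz : ¬ g₁ =ᵐ[μ] 0) :
    ∃ c : ℂ, g₂ =ᵐ[μ] fun x => c * g₁ x := by
  have hqmp := herg.quasiMeasurePreserving
  -- ‖g₁‖ is a.e. invariant
  have hnorm : (fun x => ‖g₁ x‖) ∘ θ =ᵐ[μ] fun x => ‖g₁ x‖ := by
    filter_upwards [h₁] with x hx
    have : ‖g₁ (θ x) * ((f x ^ n : Circle) : ℂ)‖ = ‖g₁ x‖ := by rw [hx]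
    simpa [norm_mul, Circle.norm_coe] using this
  obtain ⟨r, hr⟩ := herg.ae_eq_const_of_ae_eq_comp_ae
    (h₁m.aestronglyMeasurable.norm) hnorm
  have hrne : r ≠ 0 := by
    intro h0
    apply hnz
    filter_upwards [hr] with x hx
    simpa [h0, norm_eq_zero] using hx
  have hg₁ne : ∀ᵐ x ∂μ, g₁ x ≠ 0 := by
    filter_upwards [hr] with x hx h0
    exact hrne (by simpa [h0] using hx.symm)
  have hg₁neθ : ∀ᵐ x ∂μ, g₁ (θ x) ≠ 0 := hqmp.ae hg₁ne
  -- the quotient is a.e. invariant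
  have hquot : (fun x => g₂ x / g₁ x) ∘ θ =ᵐ[μ] fun x => g₂ x / g₁ x := by
    filter_upwards [h₁, h₂, hg₁ne, hg₁neθ] with x hx₁ hx₂ hne hneθ
    have hfne : ((f x ^ n : Circle) : ℂ) ≠ 0 := Circle.coe_ne_zero _
    simp only [Function.comp_apply]
    rw [← hx₁, ← hx₂]
    field_simp
  obtain ⟨c, hc⟩ := herg.ae_eq_const_of_ae_eq_comp_ae
    ((h₂m.aestronglyMeasurable.aemeasurable.div h₁m.aestronglyMeasurable.aemeasurable).aestronglyMeasurable) hquot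
  refine ⟨c, ?_⟩
  filter_upwards [hc, hg₁ne] with x hx hne
  have hdiv : g₂ x / g₁ x = c := hx
  rw [div_eq_iff hne] at hdiv
  rw [hdiv]
end

section
/- Let A be a unital C*-algebra and U ∈ A a unitary element such that whenever (λ_k)_{k∈ℤ} ∈ ℓ¹(ℤ) satisfies Σ_{k∈ℤ} λ_k U^k = 0, then λ_k = 0 for all k. Then the C*-subalgebra generated by U and the identity is *-isomorphic to C(T), via an isomorphism sending U^n to the character χ_n(z) = z^n for each n ∈ ℤ. -/
open Filter Asymptotics Set
open scoped Real


section Aux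

lemma hasDerivAt_maxpow (k : ℕ) (hk : 2 ≤ k) (t : ℝ) :
    HasDerivAt (fun s : ℝ => max 0 s ^ k) (k * max 0 t ^ (k - 1)) t := by
  rcases lt_trichotomy t 0 with ht | rfl | ht
  · have hev : (fun s : ℝ => max 0 s ^ k) =ᶠ[nhds t] fun _ => 0 := by
      filter_upwards [Iio_mem_nhds ht] with s hs
      rw [max_eq_left (le_of_lt hs), zero_pow (by omega)]
    have h0 : HasDerivAt (fun _ : ℝ => (0:ℝ)) 0 t := hasDerivAt_const t 0
    refine (h0.congr_of_eventuallyEq hev).congr_deriv ?_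
    rw [max_eq_left (le_of_lt ht), zero_pow (by omega : k - 1 ≠ 0), mul_zero]
  · rw [hasDerivAt_iff_isLittleO]
    simp only [max_self, sub_zero, zero_pow (by omega : k ≠ 0), zero_pow (by omega : k - 1 ≠ 0),
      mul_zero, smul_zero, sub_zero]
    have h1 : (fun s : ℝ => max 0 s ^ (k - 1)) =o[nhds 0] (fun _ => (1 : ℝ)) := by
      rw [isLittleO_one_iff]
      have hC : ContinuousAt (fun s : ℝ => max 0 s ^ (k - 1)) 0 := by fun_prop
      simpa [zero_pow (by omega : k - 1 ≠ 0)] using hC.tendsto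
    have h2 : (fun s : ℝ => max 0 s) =O[nhds 0] (fun s : ℝ => s) := by
      refine IsBigO.of_bound 1 (Eventually.of_forall fun s => ?_)
      rw [one_mul, Real.norm_eq_abs, Real.norm_eq_abs, abs_le]
      exact ⟨(neg_abs_le s).trans (le_max_right 0 s), max_le (abs_nonneg s) (le_abs_self s)⟩
    have h3 := h1.mul_isBigO h2
    simp only [one_mul] at h3
    refine h3.congr' (Eventually.of_forall fun s => ?_) (Eventually.of_forall fun s => rfl)
    show (0 ⊔ s) ^ (k - 1) * (0 ⊔ s) = (0 ⊔ s) ^ k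
    rw [← pow_succ]; congr 1; omega
  · have hev : (fun s : ℝ => max 0 s ^ k) =ᶠ[nhds t] fun s => s ^ k := by
      filter_upwards [Ioi_mem_nhds ht] with s hs
      rw [max_eq_right (le_of_lt hs)]
    refine ((hasDerivAt_pow k t).congr_of_eventuallyEq hev).congr_deriv ?_
    rw [max_eq_right (le_of_lt ht)]

variable (θ c : ℝ)

/-- A `1`-periodic bump function supported where `cos (2πx - θ) > c`. -/
noncomputable def bumpF (x : ℝ) : ℂ := ((max 0 (Real.cos (2*π*x - θ) - c) ^ 3 : ℝ) : ℂ)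

noncomputable def bumpF' (x : ℝ) : ℂ :=
  ((3 * max 0 (Real.cos (2*π*x - θ) - c) ^ 2 * (-Real.sin (2*π*x - θ) * (2*π)) : ℝ) : ℂ)

noncomputable def bumpF'' (x : ℝ) : ℂ :=
  ((3 * (2 * max 0 (Real.cos (2*π*x - θ) - c) * (-Real.sin (2*π*x - θ) * (2*π)))
      * (-Real.sin (2*π*x - θ) * (2*π))
    + 3 * max 0 (Real.cos (2*π*x - θ) - c) ^ 2
      * (-(Real.cos (2*π*x - θ) * (2*π)) * (2*π)) : ℝ) : ℂ)

lemma hasDerivAt_inner (x : ℝ) :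
    HasDerivAt (fun x : ℝ => 2*π*x - θ) (2*π) x := by
  simpa using ((hasDerivAt_id x).const_mul (2*π)).sub_const θ

lemma hasDerivAt_cosg (x : ℝ) :
    HasDerivAt (fun x : ℝ => Real.cos (2*π*x - θ) - c)
      (-Real.sin (2*π*x - θ) * (2*π)) x :=
  ((Real.hasDerivAt_cos (2*π*x - θ)).comp (h₂ := Real.cos) x (hasDerivAt_inner θ x)).sub_const c

lemma hasDerivAt_sing (x : ℝ) :
    HasDerivAt (fun x : ℝ => -Real.sin (2*π*x - θ) * (2*π))
      (-(Real.cos (2*π*x - θ) * (2*π)) * (2*π)) x :=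
  (((Real.hasDerivAt_sin (2*π*x - θ)).comp x (hasDerivAt_inner θ x)).neg).mul_const (2*π)

lemma hasDerivAt_bumpF (x : ℝ) : HasDerivAt (bumpF θ c) (bumpF' θ c x) x := by
  have h := ((hasDerivAt_maxpow 3 (by norm_num) (Real.cos (2*π*x - θ) - c)).comp x
    (hasDerivAt_cosg θ c x)).ofReal_comp
  unfold bumpF bumpF'
  convert h using 2
  · rfl
  · norm_num

lemma hasDerivAt_bumpF' (x : ℝ) : HasDerivAt (bumpF' θ c) (bumpF'' θ c x) x := by
  have h2 : HasDerivAt (fun x : ℝ => max 0 (Real.cos (2*π*x - θ) - c) ^ 2)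
      (2 * max 0 (Real.cos (2*π*x - θ) - c) * (-Real.sin (2*π*x - θ) * (2*π))) x := by
    have h := (hasDerivAt_maxpow 2 (le_refl 2) (Real.cos (2*π*x - θ) - c)).comp x
      (hasDerivAt_cosg θ c x)
    refine h.congr_deriv ?_
    norm_num
  have h := (((h2.const_mul 3).mul (hasDerivAt_sing θ x))).ofReal_comp
  unfold bumpF' bumpF''
  convert h using 2
  rfl

lemma continuous_bumpF : Continuous (bumpF θ c) := by unfold bumpF; fun_prop
lemma continuous_bumpF' : Continuous (bumpF' θ c) := by unfold bumpF'; fun_prop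
lemma continuous_bumpF'' : Continuous (bumpF'' θ c) := by unfold bumpF''; fun_prop

lemma bumpF_periodic : Function.Periodic (bumpF θ c) 1 := by
  intro x
  unfold bumpF
  rw [(by ring : 2*π*(x+1) - θ = (2*π*x - θ) + 2*π), Real.cos_add_two_pi]

lemma bumpF'_periodic : Function.Periodic (bumpF' θ c) 1 := by
  intro x
  unfold bumpF'
  rw [(by ring : 2*π*(x+1) - θ = (2*π*x - θ) + 2*π), Real.cos_add_two_pi, Real.sin_add_two_pi]

end Aux
lemma bump_coeff_eq (θ c a : ℝ) {n : ℤ} (hn : n ≠ 0) :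
    fourierCoeffOn (lt_add_of_pos_right a one_pos) (bumpF θ c) n
      = (1 / (-2 * π * Complex.I * n))^2
        * fourierCoeffOn (lt_add_of_pos_right a one_pos) (bumpF'' θ c) n := by
  have hab := lt_add_of_pos_right a one_pos
  have e1 := fourierCoeffOn_of_hasDeriv_right (f := bumpF θ c) (f' := bumpF' θ c) hab hn
    (continuous_bumpF θ c).continuousOn
    (fun x _ => (hasDerivAt_bumpF θ c x).hasDerivWithinAt)
    ((continuous_bumpF' θ c).intervalIntegrable a (a+1))
  have e2 := fourierCoeffOn_of_hasDeriv_right (f := bumpF' θ c) (f' := bumpF'' θ c) hab hn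
    (continuous_bumpF' θ c).continuousOn
    (fun x _ => (hasDerivAt_bumpF' θ c x).hasDerivWithinAt)
    ((continuous_bumpF'' θ c).intervalIntegrable a (a+1))
  rw [bumpF_periodic θ c a, sub_self, mul_zero, zero_sub] at e1
  rw [bumpF'_periodic θ c a, sub_self, mul_zero, zero_sub] at e2
  rw [e1, e2]
  push_cast
  ring

lemma fourier_norm_one {T : ℝ} (n : ℤ) (x : AddCircle T) : ‖fourier n x‖ = 1 := by
  rw [fourier_apply, Circle.norm_coe]

lemma bump_coeff_norm_bound (θ c a M : ℝ)
    (hM : ∀ x ∈ Set.Icc a (a+1), ‖bumpF'' θ c x‖ ≤ M) {n : ℤ} (hn : n ≠ 0) :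
    ‖fourierCoeffOn (lt_add_of_pos_right a one_pos) (bumpF θ c) n‖
      ≤ M / (4*π^2) * (1/(n:ℝ)^2) := by
  have hM0 : 0 ≤ M := le_trans (norm_nonneg _) (hM a ⟨le_refl a, by linarith⟩)
  rw [bump_coeff_eq θ c a hn, norm_mul, norm_pow]
  have hK : ‖(1 / (-2 * ↑π * Complex.I * (n:ℂ)) : ℂ)‖ = 1 / (2*π*|(n:ℝ)|) := by
    simp [norm_div, map_mul, Complex.norm_I, abs_of_pos Real.pi_pos]
  have hI : ‖fourierCoeffOn (lt_add_of_pos_right a one_pos) (bumpF'' θ c) n‖ ≤ M := by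
    rw [fourierCoeffOn_eq_integral]
    have hbound : ∀ x ∈ Set.uIoc a (a+1), ‖fourier (-n) (x : AddCircle (a+1-a)) • bumpF'' θ c x‖ ≤ M := by
      intro x hx
      rw [norm_smul, fourier_norm_one, one_mul]
      refine hM x ?_
      have := Set.uIoc_of_le (by linarith : a ≤ a + 1) ▸ hx
      exact ⟨le_of_lt this.1, this.2⟩
    have h := intervalIntegral.norm_integral_le_of_norm_le_const hbound
    rw [norm_smul]
    calc ‖(1/((a+1)-a) : ℝ)‖ * ‖∫ x in a..a+1, fourier (-n) (x : AddCircle (a+1-a)) • bumpF'' θ c x‖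
        ≤ 1 * (M * |a+1-a|) := by
          refine mul_le_mul ?_ h (norm_nonneg _) one_pos.le
          simp
      _ = M := by simp
  calc ‖(1 / (-2 * ↑π * Complex.I * (n:ℂ)) : ℂ)‖^2
        * ‖fourierCoeffOn (lt_add_of_pos_right a one_pos) (bumpF'' θ c) n‖
      ≤ (1 / (2*π*|(n:ℝ)|))^2 * M := by
        rw [hK]
        exact mul_le_mul_of_nonneg_left hI (by positivity)
    _ = M / (4*π^2) * (1/(n:ℝ)^2) := by
        rw [div_pow, one_pow, mul_pow, mul_pow, sq_abs]
        ring

lemma bump_coeff_summable (θ c a : ℝ) :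
    Summable (fun n : ℤ =>
      ‖fourierCoeffOn (lt_add_of_pos_right a one_pos) (bumpF θ c) n‖) := by
  obtain ⟨M, hM⟩ := (isCompact_Icc (a := a) (b := a+1)).exists_bound_of_continuousOn
    (continuous_bumpF'' θ c).continuousOn
  refine Summable.of_norm_bounded_eventually
    (g := fun n : ℤ => (M/(4*π^2)) * (1/(n:ℝ)^2)) ?_ ?_
  · exact (Real.summable_one_div_int_pow.mpr (by norm_num)).mul_left _
  · filter_upwards [Filter.eventually_cofinite_ne 0] with n hn
    rw [norm_norm]
    exact bump_coeff_norm_bound θ c a M hM hn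

lemma fourier_eq_toCircle_zpow (n : ℤ) (q : AddCircle (1:ℝ)) :
    fourier n q = ((AddCircle.toCircle q : ℂ)) ^ n := by
  induction q using QuotientAddGroup.induction_on with
  | H x =>
    rw [fourier_coe_apply, AddCircle.toCircle_apply_mk, Circle.coe_exp,
      ← Complex.exp_int_mul]
    congr 1
    push_cast
    ring


/-- The character `z ↦ z^n` on the unit circle, as a continuous function. -/
noncomputable def circleChar (n : ℤ) : C(Circle, ℂ) :=
  ⟨fun z => ((z ^ n : Circle) : ℂ), continuous_subtype_val.comp (continuous_zpow n)⟩

/-- If `U` is a unitary in a unital C*-algebra whose integer powers are "ℓ¹-independent",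
then the C*-subalgebra generated by `U` and the identity is *-isomorphic to `C(𝕋)` via
an isomorphism sending the character `χ_n(z) = z^n` to `U^n`. -/
theorem elemental_iso_continuous_functions_circle
    {A : Type*} [NormedRing A] [StarRing A] [CStarRing A] [CompleteSpace A]
    [NormedAlgebra ℂ A] [StarModule ℂ A] (U : unitary A)
    (hind : ∀ lam : ℤ → ℂ, Summable (fun k => ‖lam k‖) →
      ∑' k : ℤ, lam k • ((U ^ k : unitary A) : A) = 0 → ∀ k, lam k = 0) :
    ∃ φ : C(Circle, ℂ) ≃⋆ₐ[ℂ] StarAlgebra.elemental ℂ ((U : A)),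
      ∀ n : ℤ, ((φ (circleChar n) : StarAlgebra.elemental ℂ ((U : A))) : A)
        = ((U ^ n : unitary A) : A) := by
  letI : CStarAlgebra A := {}
  have hU : IsStarNormal ((U : A)) := Unitary.coe_isStarNormal U
  have hsub : spectrum ℂ (U : A) ⊆ Metric.sphere (0:ℂ) 1 :=
    Unitary.spectrum_subset_circle U
  have hcont : ∀ n : ℤ, ContinuousOn (fun z : ℂ => z ^ n) (spectrum ℂ (U : A)) := by
    intro n
    refine ContinuousOn.mono (continuousOn_zpow₀ n) fun z hz => ?_
    have h1 : ‖z‖ = 1 := by simpa using hsub hz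
    simp only [Set.mem_compl_iff, Set.mem_singleton_iff]
    intro h0
    rw [h0] at h1; simp at h1
  have key : ∀ n : ℤ, cfc (fun z : ℂ => z ^ n) (U : A) = ((U ^ n : unitary A) : A) := by
    intro n
    have h := cfc_zpow (R := ℂ) (Unitary.toUnits U) n (by rwa [Unitary.val_toUnits_apply])
    rw [Unitary.val_toUnits_apply] at h
    rw [h, ← map_zpow, Unitary.val_toUnits_apply]
  have keyHom : ∀ n : ℤ,
      cfcHom hU (R := ℂ) ⟨(spectrum ℂ (U : A)).domRestrict (fun z : ℂ => z ^ n),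
        (hcont n).restrict⟩ = ((U ^ n : unitary A) : A) := by
    intro n
    rw [← cfc_apply (fun z : ℂ => z ^ n) (U : A) hU (hcont n)]
    exact key n
  haveI : Fact ((0:ℝ) < 1) := ⟨one_pos⟩
  -- the continuous parametrization of the spectrum by `AddCircle 1`
  let q : AddCircle (1:ℝ) ≃ₜ Circle := AddCircle.homeomorphCircle one_ne_zero
  let pC : C(spectrum ℂ (U : A), AddCircle (1:ℝ)) :=
    ⟨fun z => q.symm ⟨z.1, hsub z.2⟩,
      q.symm.continuous.comp (Continuous.subtype_mk continuous_subtype_val _)⟩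
  have hpC : ∀ z : spectrum ℂ (U : A), ((AddCircle.toCircle (pC z) : ℂ)) = (z : ℂ) := by
    intro z
    rw [← AddCircle.homeomorphCircle_apply one_ne_zero]
    exact congrArg Subtype.val (q.apply_symm_apply ⟨z.1, hsub z.2⟩)
  have hfour : ∀ (i : ℤ) (z : spectrum ℂ (U : A)), fourier i (pC z) = (z : ℂ) ^ i := by
    intro i z
    rw [fourier_eq_toCircle_zpow, hpC]
  let Ψ : C(AddCircle (1:ℝ), ℂ) →⋆ₐ[ℂ] A :=
    (cfcHom hU (R := ℂ)).comp (ContinuousMap.compStarAlgHom' ℂ ℂ pC)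
  have hΨc : Continuous Ψ :=
    (cfcHom_continuous hU).comp (ContinuousMap.continuous_precomp pC)
  have hΨfour : ∀ i : ℤ, Ψ (fourier i) = ((U ^ i : unitary A) : A) := by
    intro i
    show cfcHom hU ((fourier i).comp pC) = _
    rw [← keyHom i]
    congr 1
    ext z
    exact hfour i z
  -- the spectrum is the full circle
  have hσ : spectrum ℂ (U : A) = Metric.sphere (0:ℂ) 1 := by
    by_contra hne
    obtain ⟨z₀, hz₀s, hz₀⟩ := Set.not_subset.1 (fun hs => hne (hsub.antisymm hs))
    obtain ⟨ε, hε, hball⟩ := Metric.isOpen_iff.1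
      (spectrum.isClosed (𝕜 := ℂ) (U : A)).isOpen_compl z₀ hz₀
    obtain ⟨c, hc1, hcprop⟩ : ∃ c : ℝ, c < 1 ∧ ∀ t : ℝ, c < Real.cos t →
        ‖Complex.exp ((t : ℂ) * Complex.I) - 1‖ < ε := by
      refine ⟨1 - ε^2/8, by nlinarith, fun t hct => ?_⟩
      have h1 : (Complex.exp ((t : ℂ) * Complex.I) - 1).re = Real.cos t - 1 := by
        simp [Complex.exp_ofReal_mul_I_re]
      have h2 : (Complex.exp ((t : ℂ) * Complex.I) - 1).im = Real.sin t := by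
        simp [Complex.exp_ofReal_mul_I_im]
      have hsq : (‖Complex.exp ((t : ℂ) * Complex.I) - 1‖)^2
          = (Real.cos t - 1)^2 + (Real.sin t)^2 := by
        rw [Complex.sq_norm, Complex.normSq_apply, h1, h2]
        ring
      have hA := norm_nonneg (Complex.exp ((t : ℂ) * Complex.I) - 1)
      nlinarith [Real.sin_sq_add_cos_sq t]
    set θ : ℝ := Complex.arg z₀ with hθdef
    have hz₀n : ‖z₀‖ = 1 := by simpa using hz₀s
    have hz₀e : Complex.exp ((θ : ℂ) * Complex.I) = z₀ := by
      have h := Complex.norm_mul_exp_arg_mul_I z₀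
      rwa [hz₀n, Complex.ofReal_one, one_mul] at h
    set a : ℝ := θ/(2*π) - 1/2 with hadef
    have hone : bumpF θ c a = bumpF θ c (a + 1) := (bumpF_periodic θ c a).symm
    let fCM : C(AddCircle (1:ℝ), ℂ) :=
      ⟨AddCircle.liftIco 1 a (bumpF θ c),
        AddCircle.liftIco_continuous hone (continuous_bumpF θ c).continuousOn⟩
    have hco : ∀ n : ℤ, fourierCoeff (⇑fCM) n
        = fourierCoeffOn (lt_add_of_pos_right a one_pos) (bumpF θ c) n := by
      intro n
      show fourierCoeff (AddCircle.liftIco 1 a (bumpF θ c)) n = _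
      exact fourierCoeff_liftIco_eq (T := 1) (bumpF θ c) n
    have hsum : Summable (fun n : ℤ => ‖fourierCoeff (⇑fCM) n‖) := by
      have := bump_coeff_summable θ c a
      refine this.congr fun n => ?_
      rw [hco n]
    have hS := hasSum_fourier_series_of_summable (f := fCM) hsum.of_norm
    -- the composition with pC vanishes.
    have hcompzero : fCM.comp pC = 0 := by
      ext z
      show fCM (pC z) = 0
      set x : Set.Ico a (a + 1) := AddCircle.equivIco 1 a (pC z) with hxdef
      have hx : ((x : ℝ) : AddCircle (1:ℝ)) = pC z := (AddCircle.equivIco 1 a).symm_apply_apply (pC z)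
      rw [← hx]
      show AddCircle.liftIco 1 a (bumpF θ c) _ = 0
      rw [AddCircle.liftIco_coe_apply x.2]
      -- if nonzero, cos (2πx - θ) > c and z is ε-close to z₀
      by_contra habs
      have hgt : c < Real.cos (2*π*(x:ℝ) - θ) := by
        by_contra hle
        push_neg at hle
        apply habs
        unfold bumpF
        rw [max_eq_left (by linarith), zero_pow (by norm_num), Complex.ofReal_zero]
      have hnear := hcprop _ hgt
      have hz : (z : ℂ) = Complex.exp ((2*π*(x:ℝ) : ℂ) * Complex.I) := by
        rw [← hpC z, ← hx, AddCircle.toCircle_apply_mk, Circle.coe_exp]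
        norm_num
      have hdist : dist (z : ℂ) z₀ < ε := by
        rw [Complex.dist_eq, hz, ← hz₀e]
        have hfac : Complex.exp ((2*π*(x:ℝ) : ℂ) * Complex.I)
            - Complex.exp ((θ : ℂ) * Complex.I)
            = Complex.exp ((θ : ℂ) * Complex.I)
              * (Complex.exp (((2*π*(x:ℝ) - θ : ℝ) : ℂ) * Complex.I) - 1) := by
          rw [mul_sub, ← Complex.exp_add, mul_one]
          congr 2
          push_cast
          ring
        rw [hfac, norm_mul, Complex.norm_exp_ofReal_mul_I, one_mul]
        exact hnear
      exact hball (Metric.mem_ball.2 hdist) z.2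
    -- hence the ℓ¹ combination of powers of U vanishes
    have hS2 : HasSum (fun i : ℤ => fourierCoeff (⇑fCM) i • ((U ^ i : unitary A) : A))
        (Ψ fCM) := by
      have h := hS.map Ψ hΨc
      simp only [Function.comp_def, map_smul, hΨfour] at h
      exact h
    have hΨf : Ψ fCM = 0 := by
      show cfcHom hU (fCM.comp pC) = 0
      rw [hcompzero, map_zero]
    rw [hΨf] at hS2
    have hzero := hind _ hsum hS2.tsum_eq
    -- but the function is not identically zero
    simp only [hzero, zero_smul] at hS
    have hf0 : fCM = 0 := hS.unique hasSum_zero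
    have hmem : θ/(2*π) ∈ Set.Ico a (a + 1) := by
      constructor
      · rw [hadef]; linarith
      · rw [hadef]; linarith
    have hval : fCM ((θ/(2*π) : ℝ) : AddCircle (1:ℝ)) = bumpF θ c (θ/(2*π)) := by
      show AddCircle.liftIco 1 a (bumpF θ c) _ = _
      exact AddCircle.liftIco_coe_apply hmem
    rw [hf0] at hval
    have harg : 2*π*(θ/(2*π)) - θ = 0 := by
      rw [mul_div_cancel₀ θ (by positivity : (2*π:ℝ) ≠ 0), sub_self]
    unfold bumpF at hval
    rw [harg, Real.cos_zero] at hval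
    have hpos : (0:ℝ) < max 0 (1 - c) ^ 3 := by
      rw [max_eq_right (by linarith)]
      exact pow_pos (by linarith) 3
    rw [show ((0 : C(AddCircle (1:ℝ), ℂ)) ((θ/(2*π) : ℝ) : AddCircle (1:ℝ))) = 0 from rfl] at hval
    rw [eq_comm, Complex.ofReal_eq_zero] at hval
    rw [hval] at hpos
    exact lt_irrefl 0 hpos
  -- Step C : build the isomorphism
  let h : spectrum ℂ (U : A) ≃ₜ Circle :=
    { toFun := fun z => ⟨z.1, show z.1 ∈ Metric.sphere (0:ℂ) 1 from hσ ▸ z.2⟩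
      invFun := fun z => ⟨z.1, hσ ▸ (z.2 : (z : ℂ) ∈ Metric.sphere (0:ℂ) 1)⟩
      left_inv := fun z => rfl
      right_inv := fun z => rfl
      continuous_toFun := Continuous.subtype_mk (by fun_prop) _
      continuous_invFun := Continuous.subtype_mk (by fun_prop) _ }
  refine ⟨(h.compStarAlgEquiv' ℂ ℂ).trans (continuousFunctionalCalculus (U : A)), fun n => ?_⟩
  rw [← key n, cfc_apply (fun z : ℂ => z ^ n) (U : A) hU (hcont n)]
  rw [cfcHom_eq_of_isStarNormal]
  rfl
end

section
/- Let ℤ_∞ be the one-point compactification of ℤ, θ₀ the shift l ↦ l+1 (fixing ∞), and f : ℤ_∞ → T defined by f(0) = −1 and f(l) = 1 for l ≠ 0 (including l = ∞). For n ∈ ℤ, the continuous cohomological equation g(θ₀(l)) f(l)^n = g(l) for all l ∈ ℤ_∞ has a nontrivial continuous solution g : ℤ_∞ → ℂ if and only if n is even. -/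
/-- The shift on the one-point compactification of `ℤ`, fixing `∞`. -/
def shiftZ : OnePoint ℤ → OnePoint ℤ := OnePoint.map (· + 1)

/-- The function `f : ℤ_∞ → 𝕋` with `f(0) = -1` and `f(l) = 1` otherwise. -/
noncomputable def fSign : OnePoint ℤ → ℂ :=
  open scoped Classical in
  fun x => if x = ((0 : ℤ) : OnePoint ℤ) then -1 else 1

lemma fSign_zero : fSign ((0 : ℤ) : OnePoint ℤ) = -1 := by simp [fSign]

lemma fSign_ne {x : OnePoint ℤ} (h : x ≠ ((0 : ℤ) : OnePoint ℤ)) : fSign x = 1 := by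
  simp [fSign, h]

lemma shiftZ_coe (k : ℤ) : shiftZ (k : OnePoint ℤ) = ((k + 1 : ℤ) : OnePoint ℤ) := rfl

lemma tendsto_int_infty : Filter.Tendsto (fun m : ℕ => ((m : ℤ) : OnePoint ℤ))
    Filter.atTop (nhds (OnePoint.infty)) := by
  refine OnePoint.tendsto_coe_infty.comp ?_
  rw [Filter.coclosedCompact_eq_cocompact, cocompact_eq_atBot_atTop]
  exact tendsto_natCast_atTop_atTop.mono_right le_sup_right

lemma tendsto_neg_int_infty : Filter.Tendsto (fun m : ℕ => ((-(m : ℤ) : ℤ) : OnePoint ℤ))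
    Filter.atTop (nhds (OnePoint.infty)) := by
  refine OnePoint.tendsto_coe_infty.comp ?_
  rw [Filter.coclosedCompact_eq_cocompact, cocompact_eq_atBot_atTop]
  have h1 : Filter.Tendsto (fun m : ℕ => -(m : ℤ)) Filter.atTop Filter.atBot := by
    have := (tendsto_natCast_atTop_atTop (R := ℤ)).comp (f := fun m : ℕ => m) Filter.tendsto_id
    exact Filter.tendsto_neg_atBot_iff.mpr this
  exact h1.mono_right le_sup_left

/-- The continuous cohomological equation `g(θ₀(l)) f(l)^n = g(l)` on `ℤ_∞` has a
nontrivial continuous solution iff `n` is even. -/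
theorem continuous_cohomological_iff_even (n : ℤ) :
    (∃ g : C(OnePoint ℤ, ℂ), g ≠ 0 ∧
      ∀ l : OnePoint ℤ, g (shiftZ l) * (fSign l) ^ n = g l) ↔ Even n := by
  constructor
  · rintro ⟨g, hg0, hg⟩
    by_contra h
    rw [Int.not_even_iff_odd] at h
    -- the equation simplifies to g(l+1) * fSign l = g l
    have key : ∀ l : OnePoint ℤ, g (shiftZ l) * fSign l = g l := by
      intro l
      have := hg l
      by_cases hl : l = ((0 : ℤ) : OnePoint ℤ)
      · rw [hl] at this ⊢
        rw [fSign_zero] at this ⊢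
        rwa [h.neg_one_zpow] at this
      · rw [fSign_ne hl] at this ⊢
        rwa [one_zpow] at this
    set c := g ((0 : ℤ) : OnePoint ℤ) with hc
    -- g is c on nonpositive integers
    have hneg : ∀ m : ℕ, g ((-(m : ℤ) : ℤ) : OnePoint ℤ) = c := by
      intro m
      induction m with
      | zero => simp [hc]
      | succ k ih =>
        have h0 : ((-(k + 1 : ℕ) : ℤ) : OnePoint ℤ) ≠ ((0 : ℤ) : OnePoint ℤ) := by
          simp [OnePoint.coe_eq_coe]
          omega
        have := key ((-(k + 1 : ℕ) : ℤ) : OnePoint ℤ)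
        rw [fSign_ne h0, mul_one, shiftZ_coe] at this
        rw [← this]
        have e : (-(↑(k + 1) : ℤ) + 1) = -(k : ℤ) := by push_cast; ring
        rw [e]; exact ih
    -- g is -c on positive integers
    have hpos : ∀ m : ℕ, g (((m : ℤ) + 1 : ℤ) : OnePoint ℤ) = -c := by
      intro m
      induction m with
      | zero =>
        have := key ((0 : ℤ) : OnePoint ℤ)
        rw [fSign_zero, shiftZ_coe, mul_neg_one, neg_eq_iff_eq_neg] at this
        simpa using this
      | succ k ih =>
        have h0 : (((k : ℤ) + 1 : ℤ) : OnePoint ℤ) ≠ ((0 : ℤ) : OnePoint ℤ) := by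
          simp [OnePoint.coe_eq_coe]
          omega
        have := key (((k : ℤ) + 1 : ℤ) : OnePoint ℤ)
        rw [fSign_ne h0, mul_one, shiftZ_coe] at this
        have e : ((↑(k + 1) : ℤ) + 1) = (k : ℤ) + 1 + 1 := by push_cast; ring
        rw [e, this]; exact ih
    -- limits at infinity
    have hcont : Filter.Tendsto g (nhds (OnePoint.infty)) (nhds (g OnePoint.infty)) :=
      g.continuous.continuousAt
    have lim1 : Filter.Tendsto (fun m : ℕ => g (((m : ℤ) + 1 : ℤ) : OnePoint ℤ))
        Filter.atTop (nhds (g OnePoint.infty)) := by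
      refine hcont.comp ?_
      have : (fun m : ℕ => (((m : ℤ) + 1 : ℤ) : OnePoint ℤ))
          = (fun m : ℕ => (((m + 1 : ℕ) : ℤ) : OnePoint ℤ)) := by
        funext m; norm_num
      rw [this]
      exact tendsto_int_infty.comp (Filter.tendsto_add_atTop_nat 1)
    have lim2 : Filter.Tendsto (fun m : ℕ => g ((-(m : ℤ) : ℤ) : OnePoint ℤ))
        Filter.atTop (nhds (g OnePoint.infty)) := hcont.comp tendsto_neg_int_infty
    have e1 : g OnePoint.infty = -c := by
      have h' : Filter.Tendsto (fun _ : ℕ => -c) Filter.atTop (nhds (g OnePoint.infty)) := by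
        simpa [hpos] using lim1
      exact (tendsto_nhds_unique tendsto_const_nhds h').symm
    have e2 : g OnePoint.infty = c := by
      have h' : Filter.Tendsto (fun _ : ℕ => c) Filter.atTop (nhds (g OnePoint.infty)) := by
        simpa [hneg] using lim2
      exact (tendsto_nhds_unique tendsto_const_nhds h').symm
    have hc0 : c = 0 := by
      have h12 : -c = c := e1.symm.trans e2
      linear_combination -h12 / 2
    apply hg0
    ext x
    induction x using OnePoint.rec with
    | infty => simp [e2, hc0]
    | coe k =>
      simp only [ContinuousMap.zero_apply]
      rcases le_or_gt k 0 with hk | hk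
      · have := hneg (-k).toNat
        rwa [Int.toNat_of_nonneg (by omega), neg_neg, hc0] at this
      · have := hpos (k - 1).toNat
        rw [Int.toNat_of_nonneg (by omega)] at this
        simp only [sub_add_cancel] at this
        rwa [hc0, neg_zero] at this
  · intro hn
    refine ⟨ContinuousMap.const _ 1, ?_, ?_⟩
    · intro hcontra
      have : (1 : ℂ) = 0 := by
        simpa using ContinuousMap.congr_fun hcontra OnePoint.infty
      exact one_ne_zero this
    · intro l
      by_cases hl : l = ((0 : ℤ) : OnePoint ℤ)
      · simp [hl, fSign_zero, hn.neg_one_zpow]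
      · simp [fSign_ne hl]
end
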